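/- Let N be a finite index set, with fixed potential outcomes y0ᵢ, y1ᵢ ∈ ℝ and independent treatment indicators Tᵢ ~ Bernoulli(pᵢ), pᵢ ∈ (0,1). Let Πᵢ : Ω → {0,1} be a random policy inclusion indicator and ỹ0ᵢ, ỹ1ᵢ integrable predictors such that for each i, Tᵢ is independent of the triple (Πᵢ, ỹ0ᵢ, ỹ1ᵢ). Then the doubly-robust estimator V̂ = Σᵢ Πᵢ·[(Tᵢ/pᵢ)(Yᵢ - ỹ1ᵢ) - ((1-Tᵢ)/(1-pᵢ))(Yᵢ - ỹ0ᵢ) + ỹ1ᵢ - ỹ0ᵢ], with Yᵢ = Tᵢ·y1ᵢ + (1-Tᵢ)·y0ᵢ, satisfies E[V̂ - V_Π] = 0 where V_Π = Σᵢ Πᵢ·(y1ᵢ - y0ᵢ). -/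

import Mathlib

open MeasureTheory ProbabilityTheory

/-- Main theorem: the doubly-robust estimator is unbiased for the value of an
optimized policy, provided each unit's treatment indicator Tᵢ is independent of
the triple (Πᵢ, ỹ0ᵢ, ỹ1ᵢ). -/
theorem doubly_robust_optimized_policy_unbiased
    {Ω : Type*} [MeasureSpace Ω] [IsProbabilityMeasure (ℙ : Measure Ω)]
    {ι : Type*} [Fintype ι]
    (T : ι → Ω → ℝ) (p : ι → ℝ) (y0 y1 : ι → ℝ)
    (hp0 : ∀ i, 0 < p i) (hp1 : ∀ i, p i < 1)
    (hmT : ∀ i, Measurable (T i))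
    (hT01 : ∀ i ω, T i ω = 0 ∨ T i ω = 1)
    (hE : ∀ i, ∫ ω, T i ω = p i)
    (hTindep : iIndepFun T)
    (Y : ι → Ω → ℝ) (hY : ∀ i ω, Y i ω = T i ω * y1 i + (1 - T i ω) * y0 i)
    (Pol : ι → Ω → ℝ) (hmPol : ∀ i, Measurable (Pol i))
    (hPol01 : ∀ i ω, Pol i ω = 0 ∨ Pol i ω = 1)
    (yt0 yt1 : ι → Ω → ℝ)
    (hInt0 : ∀ i, Integrable (yt0 i)) (hInt1 : ∀ i, Integrable (yt1 i))
    (hIndep : ∀ i, IndepFun (T i) (fun ω => (Pol i ω, yt0 i ω, yt1 i ω)))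
    (Vhat VPol : Ω → ℝ)
    (hV : ∀ ω, Vhat ω = ∑ i, Pol i ω *
        ((T i ω / p i) * (Y i ω - yt1 i ω)
          - ((1 - T i ω) / (1 - p i)) * (Y i ω - yt0 i ω) + yt1 i ω - yt0 i ω))
    (hVPol : ∀ ω, VPol ω = ∑ i, Pol i ω * (y1 i - y0 i)) :
    ∫ ω, (Vhat ω - VPol ω) = 0 := by
  classical
  have hp0' : ∀ i, p i ≠ 0 := fun i => (hp0 i).ne'
  have hp1' : ∀ i, (1 : ℝ) - p i ≠ 0 := fun i => by have := hp1 i; intro h; linarith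
  -- the linear-in-T decomposition of each summand
  set A : ι → Ω → ℝ := fun i ω =>
    Pol i ω * ((y1 i - yt1 i ω) / p i + (y0 i - yt0 i ω) / (1 - p i)) with hA
  set B : ι → Ω → ℝ := fun i ω =>
    Pol i ω * (-((y0 i - yt0 i ω) / (1 - p i)) + yt1 i ω - yt0 i ω - y1 i + y0 i) with hB
  have hterm : ∀ i ω,
      Pol i ω * ((T i ω / p i) * (Y i ω - yt1 i ω)
          - ((1 - T i ω) / (1 - p i)) * (Y i ω - yt0 i ω) + yt1 i ω - yt0 i ω)
        - Pol i ω * (y1 i - y0 i) = T i ω * A i ω + B i ω := by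
    intro i ω
    rcases hT01 i ω with h | h <;>
      · simp only [hA, hB, hY, h]
        field_simp
        ring
  -- integrability facts
  have hIntA : ∀ i, Integrable (A i) := by
    intro i
    have hg : Integrable (fun ω =>
        (y1 i - yt1 i ω) / p i + (y0 i - yt0 i ω) / (1 - p i)) :=
      (((integrable_const (y1 i)).sub (hInt1 i)).div_const _).add
        (((integrable_const (y0 i)).sub (hInt0 i)).div_const _)
    exact hg.bdd_mul (hmPol i).aestronglyMeasurable
      (c := 1) (Filter.Eventually.of_forall fun ω => by rcases hPol01 i ω with h | h <;> simp [h])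
  have hIntB : ∀ i, Integrable (B i) := by
    intro i
    have hg : Integrable (fun ω =>
        -((y0 i - yt0 i ω) / (1 - p i)) + yt1 i ω - yt0 i ω - y1 i + y0 i) :=
      (((((((integrable_const (y0 i)).sub (hInt0 i)).div_const _).neg).add
        (hInt1 i)).sub (hInt0 i)).sub (integrable_const (y1 i))).add (integrable_const (y0 i))
    exact hg.bdd_mul (hmPol i).aestronglyMeasurable
      (c := 1) (Filter.Eventually.of_forall fun ω => by rcases hPol01 i ω with h | h <;> simp [h])
  have hIntTA : ∀ i, Integrable (fun ω => T i ω * A i ω) := fun i =>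
    (hIntA i).bdd_mul (hmT i).aestronglyMeasurable
      (c := 1) (Filter.Eventually.of_forall fun ω => by rcases hT01 i ω with h | h <;> simp [h])
  -- independence of T i and A i
  have hindA : ∀ i, IndepFun (T i) (A i) := by
    intro i
    have hφ : Measurable (fun w : ℝ × ℝ × ℝ =>
        w.1 * ((y1 i - w.2.2) / p i + (y0 i - w.2.1) / (1 - p i))) := by fun_prop
    exact (hIndep i).comp measurable_id hφ
  -- each summand integrates to zero
  have hzero : ∀ i, (∫ ω, (T i ω * A i ω + B i ω)) = 0 := by
    intro i
    have h1 : (fun ω => T i ω * A i ω) = T i * A i := rfl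
    rw [integral_add (hIntTA i) (hIntB i)]
    have h2 : (∫ ω, T i ω * A i ω) = p i * ∫ ω, A i ω := by
      rw [show (∫ ω, T i ω * A i ω) = ∫ ω, (T i * A i) ω from rfl]
      rw [show (∫ ω, (T i * A i) ω) = integral ℙ (T i * A i) from rfl]
      rw [(hindA i).integral_mul_eq_mul_integral (hmT i).aestronglyMeasurable (hIntA i).1]
      rw [show integral ℙ (T i) = ∫ ω, T i ω from rfl, hE i]
    rw [h2]
    have h3 : p i * (∫ ω, A i ω) + ∫ ω, B i ω = ∫ ω, (p i * A i ω + B i ω) := by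
      rw [integral_add ((hIntA i).const_mul _) (hIntB i), integral_const_mul]
    rw [h3]
    have h4 : (fun ω => p i * A i ω + B i ω) = fun _ => (0 : ℝ) := by
      funext ω
      simp only [hA, hB]
      field_simp [hp0' i, hp1' i]
      ring
    rw [h4]
    simp
  -- assemble
  have key : (fun ω => Vhat ω - VPol ω)
      = fun ω => ∑ i, (T i ω * A i ω + B i ω) := by
    funext ω
    rw [hV, hVPol, ← Finset.sum_sub_distrib]
    exact Finset.sum_congr rfl fun i _ => hterm i ω
  rw [show (∫ ω, (Vhat ω - VPol ω))
      = ∫ ω, ∑ i, (T i ω * A i ω + B i ω) from by rw [key]]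
  have hfin : ∀ i ∈ Finset.univ, Integrable (fun ω => T i ω * A i ω + B i ω) ℙ :=
    fun i _ => (hIntTA i).add (hIntB i)
  rw [integral_finset_sum Finset.univ hfin]
  simp [hzero]
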